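/- In the graph H obtained by gluing a CFI gadget X_3 with external pairs (P_1, P_2, P_0) and a CFI gadget X_{k+2} with external pairs (P_1, P_2, P_3, …, P_{k+2}) along the shared pairs P_1, P_2: a color-preserving automorphism of H flips the pair P_0 if and only if it flips an odd number of the pairs P_3, …, P_{k+2}. -/

import Mathlib

open scoped Classical

/-- Even-weight binary strings of length `k`. -/
def EvenStr (k : ℕ) := {s : Fin k → Bool // Even ((Finset.univ.filter fun i => s i = true).card)}

instance (k : ℕ) : Fintype (EvenStr k) := by unfold EvenStr; infer_instance

/-- Vertices of the CFI gadget `X_k`: external pairs `P_i = {(i, false), (i, true)}`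
and middle vertices given by even-weight strings. -/
def CFIV (k : ℕ) := (Fin k × Bool) ⊕ EvenStr k

instance (k : ℕ) : Fintype (CFIV k) := by unfold CFIV; infer_instance

def CFIhalf (k : ℕ) : CFIV k → CFIV k → Prop
  | .inl (i, β), .inr s => s.1 i = β
  | _, _ => False

/-- The CFI gadget `X_k`: the middle vertex `s` is adjacent to `a_i = (i, false)`
if `s i = false` and to `b_i = (i, true)` if `s i = true`. -/
def CFI (k : ℕ) : SimpleGraph (CFIV k) where
  Adj x y := CFIhalf k x y ∨ CFIhalf k y x
  symm := ⟨fun x y h => h.symm⟩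
  loopless := ⟨fun x h => by rcases h with h | h <;> rcases x with ⟨i, β⟩ | s <;> exact h⟩

/-- Colors of `X_k`: pair `P_i` gets color `i`; all middle vertices get color `k`. -/
def CFIcolor (k : ℕ) : CFIV k → ℕ
  | .inl (i, _) => i
  | .inr _ => k

/-- `σ` flips the external pair `P_i`. -/
def CFIFlips (k : ℕ) (σ : CFIV k ≃ CFIV k) (i : Fin k) : Prop :=
  σ (.inl (i, false)) = .inl (i, true)
/-- Vertices of the gluing `H` of `X₃` (pairs `P₁, P₂, P₀`) and `X_{k+2}`
(pairs `P₁, P₂, P₃, …, P_{k+2}`) along the shared pairs `P₁, P₂`.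
Pairs are indexed by `Fin (k+3)` (index `i` is the pair `P_i`); the two middle
vertex sets `F` and `F'` are the two kinds of even-weight strings. -/
def GlueV (k : ℕ) := (Fin (k + 3) × Bool) ⊕ (EvenStr 3 ⊕ EvenStr (k + 2))

instance (k : ℕ) : Fintype (GlueV k) := by unfold GlueV; infer_instance

/-- Adjacency (one direction): the `X₃` middle vertex `s` uses pairs `P₁, P₂, P₀`
(in this order), the `X_{k+2}` middle vertex `t` uses pairs `P₁, …, P_{k+2}`. -/
def glueHalf (k : ℕ) : GlueV k → GlueV k → Prop
  | .inl (p, β), .inr (.inl s) =>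
      ∃ j : Fin 3, (![1, 2, 0] : Fin 3 → Fin (k + 3)) j = p ∧ s.1 j = β
  | .inl (p, β), .inr (.inr t) =>
      ∃ j : Fin (k + 2), (⟨j.1 + 1, Nat.succ_lt_succ j.isLt⟩ : Fin (k + 3)) = p ∧ t.1 j = β
  | _, _ => False

/-- The glued graph `H` of the CFI gadgets `X₃` and `X_{k+2}`. -/
def Glue (k : ℕ) : SimpleGraph (GlueV k) where
  Adj x y := glueHalf k x y ∨ glueHalf k y x
  symm := ⟨fun x y h => h.symm⟩
  loopless := ⟨fun x h => by rcases h with h | h <;> rcases x with ⟨p, β⟩ | s | t <;> exact h⟩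

/-- Colors: pair `P_p` gets color `p`; `F` gets color `k+3`; `F'` gets color `k+4`. -/
def glueColor (k : ℕ) : GlueV k → ℕ
  | .inl (p, _) => p
  | .inr (.inl _) => k + 3
  | .inr (.inr _) => k + 4

/-- `σ` flips the pair `P_p`. -/
def glueFlips (k : ℕ) (σ : GlueV k ≃ GlueV k) (p : Fin (k + 3)) : Prop :=
  σ (.inl (p, false)) = .inl (p, true)

section GlueAux

/-- indicator in `ZMod 2` -/
private def ind (b : Bool) : ZMod 2 := if b then 1 else 0

private lemma zmod_ne_zero_iff (x : ZMod 2) : x ≠ 0 ↔ x = 1 := by revert x; decide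

private lemma odd_iff_cast (n : ℕ) : Odd n ↔ (n : ZMod 2) = 1 := by
  rw [← zmod_ne_zero_iff, Ne, ZMod.natCast_eq_zero_iff,
    ← even_iff_two_dvd, ← Nat.not_even_iff_odd]

private lemma even_iff_sum (n : ℕ) (f : Fin n → Bool) :
    Even ((Finset.univ.filter fun i => f i = true).card) ↔ (∑ i, ind (f i)) = 0 := by
  rw [even_iff_two_dvd, ← ZMod.natCast_eq_zero_iff, Finset.card_filter]
  push_cast
  simp only [ind, apply_ite, Nat.cast_one, Nat.cast_zero]

private lemma vec_inj (k : ℕ) : Function.Injective (![1, 2, 0] : Fin 3 → Fin (k + 3)) := by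
  have hv1 : ((1 : Fin (k + 3)) : ℕ) = 1 := by
    rw [show ((1 : Fin (k + 3)) : ℕ) = 1 % (k + 3) from rfl, Nat.mod_eq_of_lt (by omega)]
  have hv2 : ((2 : Fin (k + 3)) : ℕ) = 2 := by
    rw [show ((2 : Fin (k + 3)) : ℕ) = 2 % (k + 3) from rfl, Nat.mod_eq_of_lt (by omega)]
  intro j' j hj
  fin_cases j' <;> fin_cases j <;> simp_all [Fin.ext_iff, hv1, hv2, Nat.mod_eq_of_lt (show 2 < k + 3 by omega),
    Nat.mod_eq_of_lt (show 1 < k + 3 by omega)]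

end GlueAux

/-- In the gluing `H` of `X₃` and `X_{k+2}` along the shared pairs `P₁, P₂`, a
color-preserving automorphism flips the pair `P₀` if and only if it flips an odd
number of the pairs `P₃, …, P_{k+2}`. -/
theorem glue_flip_parity (k : ℕ) (hk : 1 ≤ k) (σ : GlueV k ≃ GlueV k)
    (hadj : ∀ x y, (Glue k).Adj x y ↔ (Glue k).Adj (σ x) (σ y))
    (hcol : ∀ v, glueColor k (σ v) = glueColor k v) :
    (glueFlips k σ 0 ↔
      Odd ((Finset.univ.filter fun p : Fin (k + 3) =>
        3 ≤ (p : ℕ) ∧ glueFlips k σ p).card)) := by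
  classical
  -- value facts about small `Fin (k+3)` literals
  have hv0 : ((0 : Fin (k + 3)) : ℕ) = 0 := rfl
  have hv1 : ((1 : Fin (k + 3)) : ℕ) = 1 := by
    rw [show ((1 : Fin (k + 3)) : ℕ) = 1 % (k + 3) from rfl, Nat.mod_eq_of_lt (by omega)]
  have hv2 : ((2 : Fin (k + 3)) : ℕ) = 2 := by
    rw [show ((2 : Fin (k + 3)) : ℕ) = 2 % (k + 3) from rfl, Nat.mod_eq_of_lt (by omega)]
  -- σ maps each pair to itself
  have hpair : ∀ (p : Fin (k + 3)) (β : Bool), ∃ γ, σ (.inl (p, β)) = .inl (p, γ) := by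
    intro p β
    have h := hcol (.inl (p, β))
    have hp := p.isLt
    rcases hq : σ (.inl (p, β)) with ⟨q, γ⟩ | s | t <;> rw [hq] at h <;>
      simp only [glueColor] at h
    · exact ⟨γ, by rw [Fin.ext_iff.mpr h]⟩
    · omega
    · omega
  choose bf hbf using hpair
  set b : Fin (k + 3) → Bool := fun p => bf p false with hbdef
  have hb : ∀ p, σ (.inl (p, false)) = .inl (p, b p) := fun p => hbf p false
  have hflip : ∀ p, glueFlips k σ p ↔ b p = true := by
    intro p
    rw [glueFlips, hb p]
    constructor
    · intro h
      have h2 : ((p, b p) : Fin (k + 3) × Bool) = (p, true) := by injection h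
      exact congrArg Prod.snd h2
    · intro h; rw [h]
  -- indicator composed with b
  set g : Fin (k + 3) → ZMod 2 := fun p => ind (b p) with hgdef
  -- the all-false middle vertices
  have hzero : ∀ n : ℕ, Even ((Finset.univ.filter fun i : Fin n =>
      (fun _ : Fin n => false) i = true).card) := by intro n; simp
  set s₀ : EvenStr 3 := ⟨fun _ => false, hzero 3⟩ with hs₀
  set t₀ : EvenStr (k + 2) := ⟨fun _ => false, hzero (k + 2)⟩ with ht₀
  -- σ maps middle classes to themselves
  have hmidF : ∃ s', σ (.inr (.inl s₀)) = .inr (.inl s') := by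
    have h := hcol (.inr (.inl s₀))
    rcases hq : σ (.inr (.inl s₀)) with ⟨q, γ⟩ | s | t <;> rw [hq] at h <;>
      simp only [glueColor] at h
    · have := q.isLt; omega
    · exact ⟨s, rfl⟩
    · omega
  have hmidF' : ∃ t', σ (.inr (.inr t₀)) = .inr (.inr t') := by
    have h := hcol (.inr (.inr t₀))
    rcases hq : σ (.inr (.inr t₀)) with ⟨q, γ⟩ | s | t <;> rw [hq] at h <;>
      simp only [glueColor] at h
    · have := q.isLt; omega
    · omega
    · exact ⟨t, rfl⟩
  obtain ⟨s', hs'⟩ := hmidF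
  obtain ⟨t', ht'⟩ := hmidF'
  -- the image of the all-false `X₃` middle vertex reads off `b` on pairs 1, 2, 0
  have hsv : ∀ j : Fin 3, s'.1 j = b ((![1, 2, 0] : Fin 3 → Fin (k + 3)) j) := by
    intro j
    have h0 : (Glue k).Adj (.inl ((![1, 2, 0] : Fin 3 → Fin (k + 3)) j, false)) (.inr (.inl s₀)) :=
      Or.inl ⟨j, rfl, rfl⟩
    have h1 := (hadj _ _).mp h0
    rw [hb, hs'] at h1
    rcases h1 with h1 | h1
    · obtain ⟨j', hj', hval⟩ := h1
      have hjj : j' = j := vec_inj k hj'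
      rw [hjj] at hval; exact hval
    · exact h1.elim
  -- the image of the all-false `X_{k+2}` middle vertex reads off `b` on pairs 1..k+2
  have htv : ∀ j : Fin (k + 2),
      t'.1 j = b (⟨j.1 + 1, Nat.succ_lt_succ j.isLt⟩ : Fin (k + 3)) := by
    intro j
    have h0 : (Glue k).Adj
        (.inl ((⟨j.1 + 1, Nat.succ_lt_succ j.isLt⟩ : Fin (k + 3)), false)) (.inr (.inr t₀)) :=
      Or.inl ⟨j, rfl, rfl⟩
    have h1 := (hadj _ _).mp h0
    rw [hb, ht'] at h1
    rcases h1 with h1 | h1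
    · obtain ⟨j', hj', hval⟩ := h1
      have hjj : j' = j := by
        have := congrArg Fin.val hj'
        simp only at this
        exact Fin.ext (by omega)
      rw [hjj] at hval; exact hval
    · exact h1.elim
  -- parity equations from the even weights of s' and t'
  have hA : g 1 + g 2 + g 0 = 0 := by
    have h := (even_iff_sum 3 s'.1).mp s'.2
    rw [Fin.sum_univ_three] at h
    rw [hsv 0, hsv 1, hsv 2] at h
    exact h
  have hB : (∑ j : Fin (k + 2), g (⟨j.1 + 1, Nat.succ_lt_succ j.isLt⟩ : Fin (k + 3))) = 0 := by
    have h := (even_iff_sum (k + 2) t'.1).mp t'.2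
    calc (∑ j : Fin (k + 2), g (⟨j.1 + 1, Nat.succ_lt_succ j.isLt⟩ : Fin (k + 3)))
        = ∑ j : Fin (k + 2), ind (t'.1 j) := by
          refine Finset.sum_congr rfl fun j _ => ?_
          rw [htv j]
      _ = 0 := h
  -- rewrite hB as a sum over `Fin (k+3)` restricted to `1 ≤ p`
  have hB' : (∑ p : Fin (k + 3), if 1 ≤ (p : ℕ) then g p else 0) = 0 := by
    rw [Fin.sum_univ_succ]
    have h00 : (if 1 ≤ ((0 : Fin (k + 3)) : ℕ) then g 0 else 0) = 0 := by rw [hv0]; norm_num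
    rw [h00, zero_add]
    refine Eq.trans ?_ hB
    refine Finset.sum_congr rfl fun j _ => ?_
    have hsj : (Fin.succ j : Fin (k + 3)) = ⟨j.1 + 1, Nat.succ_lt_succ j.isLt⟩ :=
      Fin.ext (by simp)
    rw [hsj, if_pos (show (1 : ℕ) ≤ j.1 + 1 from Nat.le_add_left 1 j.1)]
  -- split off p = 1 and p = 2
  have hsplit : (∑ p : Fin (k + 3), if 1 ≤ (p : ℕ) then g p else 0)
      = g 1 + g 2 + ∑ p : Fin (k + 3), if 3 ≤ (p : ℕ) then g p else 0 := by
    have key : ∀ p : Fin (k + 3), (if 1 ≤ (p : ℕ) then g p else 0)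
        = (if p = 1 then g p else 0) + (if p = 2 then g p else 0)
          + (if 3 ≤ (p : ℕ) then g p else 0) := by
      intro p
      by_cases h1 : p = 1
      · subst h1
        rw [if_pos (by rw [hv1]), if_pos rfl,
          if_neg (by intro h; have := congrArg Fin.val h; rw [hv1, hv2] at this; omega),
          if_neg (by rw [hv1]; omega)]
        ring
      · by_cases h2 : p = 2
        · subst h2
          rw [if_pos (by rw [hv2]; omega), if_pos rfl, if_neg h1,
            if_neg (by rw [hv2]; omega)]
          ring
        · have hp1 : (p : ℕ) ≠ 1 := fun h => h1 (Fin.ext (by rw [hv1]; exact h))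
          have hp2 : (p : ℕ) ≠ 2 := fun h => h2 (Fin.ext (by rw [hv2]; exact h))
          rw [if_neg h1, if_neg h2]
          by_cases h3 : 3 ≤ (p : ℕ)
          · rw [if_pos h3, if_pos (by omega)]; ring
          · by_cases h0 : 1 ≤ (p : ℕ)
            · omega
            · rw [if_neg h0, if_neg h3]; ring
    calc (∑ p : Fin (k + 3), if 1 ≤ (p : ℕ) then g p else 0)
        = ∑ p : Fin (k + 3), ((if p = 1 then g p else 0) + (if p = 2 then g p else 0)
            + (if 3 ≤ (p : ℕ) then g p else 0)) := Finset.sum_congr rfl fun p _ => key p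
      _ = (∑ p : Fin (k + 3), if p = 1 then g p else 0)
            + (∑ p : Fin (k + 3), if p = 2 then g p else 0)
            + ∑ p : Fin (k + 3), if 3 ≤ (p : ℕ) then g p else 0 := by
          rw [Finset.sum_add_distrib, Finset.sum_add_distrib]
      _ = g 1 + g 2 + ∑ p : Fin (k + 3), if 3 ≤ (p : ℕ) then g p else 0 := by
          rw [Finset.sum_ite_eq' Finset.univ (1 : Fin (k + 3)) g,
            Finset.sum_ite_eq' Finset.univ (2 : Fin (k + 3)) g]
          simp
  -- the target sum equals g 0
  have hT : (∑ p : Fin (k + 3), if 3 ≤ (p : ℕ) then g p else 0) = g 0 := by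
    have h1 : g 1 + g 2 + (∑ p : Fin (k + 3), if 3 ≤ (p : ℕ) then g p else 0) = 0 := by
      rw [← hsplit]; exact hB'
    linear_combination h1 - hA
  -- convert the goal
  have hcard : (((Finset.univ.filter fun p : Fin (k + 3) =>
      3 ≤ (p : ℕ) ∧ glueFlips k σ p).card : ℕ) : ZMod 2)
      = ∑ p : Fin (k + 3), if 3 ≤ (p : ℕ) then g p else 0 := by
    rw [Finset.card_filter]
    push_cast
    refine Finset.sum_congr rfl fun p _ => ?_
    by_cases h3 : 3 ≤ (p : ℕ)
    · simp only [h3, true_and, if_pos h3]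
      by_cases hf : glueFlips k σ p
      · rw [if_pos hf, hgdef]
        simp only [ind, (hflip p).mp hf]
        norm_num
      · rw [if_neg hf, hgdef]
        have hbp : b p = false := by
          cases h : b p
          · rfl
          · exact absurd ((hflip p).mpr h) hf
        simp only [ind, hbp]
        norm_num
    · simp [h3]
  rw [hflip 0, odd_iff_cast, hcard, hT, hgdef]
  simp only [ind]
  cases h0 : b 0 <;> simp
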